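/- (Proposition 1, concrete one-layer instantiation.) Let W_Q, W'_Q ∈ ℝ^{3×3} satisfy W_Q·R = R·W_Q and W'_Q·R = R·W'_Q for all R ∈ SO(3); let W_K, W_V, W'_K : ℝ³ → ℝ^{3×3} satisfy W(R·y)·R = R·W(y) for all R ∈ SO(3), y ∈ ℝ³; and let W'_V : ℝ³ → ℝ^{1×3} satisfy W'_V(R·y)·R = W'_V(y) for all R ∈ SO(3), y ∈ ℝ³. Given a point cloud X : Fin N → ℝ³ and 1 ≤ k ≤ N, define: (i) the input features f_i(X) = X i − (1/|N_i^k(X)|)·Σ_{j ∈ N_i^k(X)} X j; (ii) the self-attention output F_P(X)_i = Σ_{j ∈ N_i^k(X)} α(i,j)·W_V(X j − X i)·f_j(X) with α(i,j) = exp(⟨W_Q·f_i(X), W_K(X j − X i)·f_j(X)⟩)/Σ_{j' ∈ N_i^k(X)} exp(⟨W_Q·f_i(X), W_K(X j' − X i)·f_{j'}(X)⟩); (iii) for a query q ∈ ℝ³ whose nearest point in X has unique index c, the query feature f_q(X,q) = q − (1/|N_c^k(X)|)·Σ_{j ∈ N_c^k(X)} X j; and (iv) the occupancy score 𝒯(X,q)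 = Σ_{j ∈ N_c^k(X)} β(j)·W'_V(X j − q)·F_P(X)_j with β(j) = exp(⟨W'_Q·f_q(X,q), W'_K(X j − q)·F_P(X)_j⟩)/Σ_{j' ∈ N_c^k(X)} exp(⟨W'_Q·f_q(X,q), W'_K(X j' − q)·F_P(X)_{j'}⟩). Then the occupancy score is SE(3)-invariant: for every R ∈ SO(3) and T ∈ ℝ³, 𝒯(L_{(R,T)}[X], R·q + T) = 𝒯(X, q). -/

import Mathlib

open Matrix

noncomputable section

/-- `SO(3)`: real 3×3 orthogonal matrices of determinant 1. -/
abbrev SO3 := Matrix.specialOrthogonalGroup (Fin 3) ℝ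

noncomputable instance : Group SO3 :=
  { (inferInstance : Monoid SO3) with
    inv := fun A => ⟨star A.1, ⟨Unitary.star_mem A.2.1, by
      have h : (star A.1).det = star (A.1.det) := by
        rw [Matrix.star_eq_conjTranspose, Matrix.det_conjTranspose]
      have h2 : A.1.det = 1 := A.2.2
      simpa [MonoidHom.mem_mker, h2] using h⟩⟩
    inv_mul_cancel := fun A => Subtype.ext A.2.1.1 }

/-- Euclidean 3-space. -/
abbrev V3 := EuclideanSpace ℝ (Fin 3)

/-- Matrix-vector multiplication on Euclidean 3-space. -/
def mv (M : Matrix (Fin 3) (Fin 3) ℝ) (v : V3) : V3 :=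
  (WithLp.equiv 2 (Fin 3 → ℝ)).symm (M *ᵥ (WithLp.equiv 2 (Fin 3 → ℝ) v))

/-- Roto-translation action `L_{(R,T)}` on point clouds: `(L_{(R,T)}[X]) i = R·(X i) + T`. -/
def rt {N : ℕ} (R : SO3) (T : V3) (X : Fin N → V3) : Fin N → V3 :=
  fun i => mv (R : Matrix (Fin 3) (Fin 3) ℝ) (X i) + T

open scoped Classical in
/-- `d_k(X,i)`: the k-th smallest distance from `X i` to points of `X`. -/
def dk {N : ℕ} (X : Fin N → V3) (i : Fin N) (k : ℕ) : ℝ :=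
  sInf { d : ℝ | k ≤ (Finset.univ.filter (fun j => ‖X i - X j‖ ≤ d)).card }

open scoped Classical in
/-- `N_i^k(X)`: the k-nearest-neighbor neighborhood of point `i` (including ties). -/
def nbhd {N : ℕ} (X : Fin N → V3) (i : Fin N) (k : ℕ) : Finset (Fin N) :=
  Finset.univ.filter (fun j => ‖X i - X j‖ ≤ dk X i k)

/-- The centroid-relative input feature `f_i(X)`. -/
def feat {N : ℕ} (X : Fin N → V3) (i : Fin N) (k : ℕ) : V3 :=
  X i - ((nbhd X i k).card : ℝ)⁻¹ • ∑ j ∈ nbhd X i k, X j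

/-- The query feature `f_q(X,q)` relative to the neighborhood of the nearest index `c`. -/
def qfeat {N : ℕ} (X : Fin N → V3) (q : V3) (c : Fin N) (k : ℕ) : V3 :=
  q - ((nbhd X c k).card : ℝ)⁻¹ • ∑ j ∈ nbhd X c k, X j

/-- The self-attention output features
`F_P(X)_i = Σ_{j ∈ N_i^k(X)} α(i,j)·W_V(X j − X i)·f_j(X)`. -/
def FP {N : ℕ} (k : ℕ) (WQ : Matrix (Fin 3) (Fin 3) ℝ)
    (WK WV : V3 → Matrix (Fin 3) (Fin 3) ℝ) (X : Fin N → V3) (i : Fin N) : Fin 3 → ℝ :=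
  ∑ j ∈ nbhd X i k,
    (Real.exp ((WQ *ᵥ feat X i k) ⬝ᵥ (WK (X j - X i) *ᵥ feat X j k)) /
      ∑ j' ∈ nbhd X i k,
        Real.exp ((WQ *ᵥ feat X i k) ⬝ᵥ (WK (X j' - X i) *ᵥ feat X j' k))) •
      (WV (X j - X i) *ᵥ feat X j k)

/-- The occupancy score `𝒯(X,q) = Σ_{j ∈ N_c^k(X)} β(j)·W'_V(X j − q)·F_P(X)_j`,
where `c` is the (unique) nearest index of `q` in `X`. -/
def occScore {N : ℕ} (k : ℕ) (WQ W'Q : Matrix (Fin 3) (Fin 3) ℝ)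
    (WK WV W'K : V3 → Matrix (Fin 3) (Fin 3) ℝ) (W'V : V3 → Matrix (Fin 1) (Fin 3) ℝ)
    (X : Fin N → V3) (q : V3) (c : Fin N) : ℝ :=
  (∑ j ∈ nbhd X c k,
    (Real.exp ((W'Q *ᵥ qfeat X q c k) ⬝ᵥ (W'K (X j - q) *ᵥ FP k WQ WK WV X j)) /
      ∑ j' ∈ nbhd X c k,
        Real.exp ((W'Q *ᵥ qfeat X q c k) ⬝ᵥ (W'K (X j' - q) *ᵥ FP k WQ WK WV X j'))) •
      (W'V (X j - q) *ᵥ FP k WQ WK WV X j)) 0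


lemma RtR (R : SO3) : (R : Matrix (Fin 3) (Fin 3) ℝ)ᵀ * (R : Matrix (Fin 3) (Fin 3) ℝ) = 1 := by
  have h := R.2.1.1
  simpa [Matrix.star_eq_conjTranspose, Matrix.conjTranspose_eq_transpose_of_trivial] using h

lemma dot_mv (R : SO3) (a b : Fin 3 → ℝ) :
    ((R : Matrix (Fin 3) (Fin 3) ℝ) *ᵥ a) ⬝ᵥ ((R : Matrix (Fin 3) (Fin 3) ℝ) *ᵥ b) = a ⬝ᵥ b := by
  rw [Matrix.dotProduct_mulVec, ← Matrix.mulVec_transpose, Matrix.mulVec_mulVec, RtR,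
    Matrix.one_mulVec]

lemma mv_eq (M : Matrix (Fin 3) (Fin 3) ℝ) (v : V3) :
    (WithLp.equiv 2 (Fin 3 → ℝ)) (mv M v) = M *ᵥ (WithLp.equiv 2 (Fin 3 → ℝ) v) := rfl

lemma norm_mv (R : SO3) (v : V3) : ‖mv (R : Matrix (Fin 3) (Fin 3) ℝ) v‖ = ‖v‖ := by
  have hinner : ∀ x y : V3, (inner ℝ x y : ℝ) =
      (WithLp.equiv 2 (Fin 3 → ℝ) x) ⬝ᵥ (WithLp.equiv 2 (Fin 3 → ℝ) y) := by
    intro x y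
    simp [EuclideanSpace.inner_eq_star_dotProduct, dotProduct, mul_comm]
  have h1 : ‖mv (R : Matrix (Fin 3) (Fin 3) ℝ) v‖ ^ 2 = ‖v‖ ^ 2 := by
    rw [← real_inner_self_eq_norm_sq, ← real_inner_self_eq_norm_sq, hinner, hinner, mv_eq]
    exact dot_mv R _ _
  nlinarith [norm_nonneg (mv (R : Matrix (Fin 3) (Fin 3) ℝ) v), norm_nonneg v]

/-- mv as a linear map -/
def mvL (M : Matrix (Fin 3) (Fin 3) ℝ) : V3 →ₗ[ℝ] V3 where
  toFun := mv M
  map_add' x y := by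
    apply (WithLp.equiv 2 (Fin 3 → ℝ)).injective
    simp [mv, Matrix.mulVec_add]
  map_smul' c x := by
    apply (WithLp.equiv 2 (Fin 3 → ℝ)).injective
    simp [mv, Matrix.mulVec_smul]

lemma mv_sub (M : Matrix (Fin 3) (Fin 3) ℝ) (x y : V3) : mv M (x - y) = mv M x - mv M y :=
  map_sub (mvL M) x y

lemma mv_smul (M : Matrix (Fin 3) (Fin 3) ℝ) (c : ℝ) (x : V3) : mv M (c • x) = c • mv M x :=
  map_smul (mvL M) c x

lemma rt_sub {N : ℕ} (R : SO3) (T : V3) (X : Fin N → V3) (i j : Fin N) :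
    rt R T X i - rt R T X j = mv (R : Matrix (Fin 3) (Fin 3) ℝ) (X i - X j) := by
  rw [mv_sub]; simp [rt]

lemma dk_rt {N : ℕ} (R : SO3) (T : V3) (X : Fin N → V3) (i : Fin N) (k : ℕ) :
    dk (rt R T X) i k = dk X i k := by
  classical
  unfold dk
  congr 1
  ext d
  simp only [Set.mem_setOf_eq, rt_sub, norm_mv]

lemma nbhd_rt {N : ℕ} (R : SO3) (T : V3) (X : Fin N → V3) (i : Fin N) (k : ℕ) :
    nbhd (rt R T X) i k = nbhd X i k := by
  classical
  unfold nbhd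
  ext j
  simp [rt_sub, norm_mv, dk_rt]

lemma dk_nonneg {N : ℕ} (X : Fin N → V3) (i : Fin N) (k : ℕ) (hk1 : 1 ≤ k) :
    0 ≤ dk X i k := by
  classical
  apply Real.sInf_nonneg
  intro d hd
  by_contra hneg
  push_neg at hneg
  simp only [Set.mem_setOf_eq] at hd
  have : (Finset.univ.filter (fun j => ‖X i - X j‖ ≤ d)).card = 0 := by
    rw [Finset.card_eq_zero]
    ext j
    simp only [Finset.mem_filter, Finset.notMem_empty, iff_false, not_and]
    intro _
    have := norm_nonneg (X i - X j)
    intro h; linarith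
  omega

lemma self_mem_nbhd {N : ℕ} (X : Fin N → V3) (i : Fin N) (k : ℕ) (hk1 : 1 ≤ k) :
    i ∈ nbhd X i k := by
  classical
  simp [nbhd, dk_nonneg X i k hk1]

lemma card_nbhd_pos {N : ℕ} (X : Fin N → V3) (i : Fin N) (k : ℕ) (hk1 : 1 ≤ k) :
    (nbhd X i k).card ≠ 0 := by
  have := self_mem_nbhd X i k hk1
  exact Finset.card_ne_zero_of_mem this

lemma feat_rt {N : ℕ} (R : SO3) (T : V3) (X : Fin N → V3) (i : Fin N) (k : ℕ) (hk1 : 1 ≤ k) :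
    feat (rt R T X) i k = mv (R : Matrix (Fin 3) (Fin 3) ℝ) (feat X i k) := by
  classical
  unfold feat
  rw [nbhd_rt]
  have hsum : ∑ j ∈ nbhd X i k, rt R T X j =
      mv (R : Matrix (Fin 3) (Fin 3) ℝ) (∑ j ∈ nbhd X i k, X j) + (nbhd X i k).card • T := by
    simp only [rt]
    rw [Finset.sum_add_distrib, Finset.sum_const]
    congr 1
    exact (map_sum (mvL (R : Matrix (Fin 3) (Fin 3) ℝ)) X (nbhd X i k)).symm
  rw [hsum, mv_sub, mv_smul, smul_add]
  have hT : ((nbhd X i k).card : ℝ)⁻¹ • ((nbhd X i k).card • T) = T := by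
    rw [← Nat.cast_smul_eq_nsmul ℝ, smul_smul, inv_mul_cancel₀, one_smul]
    exact_mod_cast card_nbhd_pos X i k hk1
  rw [hT]
  simp only [rt]
  abel

lemma Wmv (W : V3 → Matrix (Fin 3) (Fin 3) ℝ)
    (hW : ∀ (R : SO3) (y : V3),
      W (mv (R : Matrix (Fin 3) (Fin 3) ℝ) y) * (R : Matrix (Fin 3) (Fin 3) ℝ) =
        (R : Matrix (Fin 3) (Fin 3) ℝ) * W y) (R : SO3) (y f : V3) :
    W (mv (R : Matrix (Fin 3) (Fin 3) ℝ) y) *ᵥ (mv (R : Matrix (Fin 3) (Fin 3) ℝ) f) =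
      (R : Matrix (Fin 3) (Fin 3) ℝ) *ᵥ (W y *ᵥ f) := by
  show W (mv (R : Matrix (Fin 3) (Fin 3) ℝ) y) *ᵥ
      ((R : Matrix (Fin 3) (Fin 3) ℝ) *ᵥ (WithLp.equiv 2 (Fin 3 → ℝ) f)) = _
  rw [Matrix.mulVec_mulVec, hW R y, ← Matrix.mulVec_mulVec]
  rfl

lemma WQmv (M0 : Matrix (Fin 3) (Fin 3) ℝ)
    (hM : ∀ R : SO3, M0 * (R : Matrix (Fin 3) (Fin 3) ℝ) = (R : Matrix (Fin 3) (Fin 3) ℝ) * M0)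
    (R : SO3) (f : V3) :
    M0 *ᵥ (mv (R : Matrix (Fin 3) (Fin 3) ℝ) f) =
      (R : Matrix (Fin 3) (Fin 3) ℝ) *ᵥ (M0 *ᵥ f) := by
  show M0 *ᵥ ((R : Matrix (Fin 3) (Fin 3) ℝ) *ᵥ (WithLp.equiv 2 (Fin 3 → ℝ) f)) = _
  rw [Matrix.mulVec_mulVec, hM R, ← Matrix.mulVec_mulVec]
  rfl

lemma mulVec_sum' (A : Matrix (Fin 3) (Fin 3) ℝ) {ι : Type*} (s : Finset ι)
    (g : ι → (Fin 3 → ℝ)) : A *ᵥ (∑ j ∈ s, g j) = ∑ j ∈ s, A *ᵥ g j := by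
  exact map_sum A.mulVecLin g s

lemma FP_rt {N : ℕ} (k : ℕ) (hk1 : 1 ≤ k) (WQ : Matrix (Fin 3) (Fin 3) ℝ)
    (hWQ : ∀ R : SO3, WQ * (R : Matrix (Fin 3) (Fin 3) ℝ) = (R : Matrix (Fin 3) (Fin 3) ℝ) * WQ)
    (WK WV : V3 → Matrix (Fin 3) (Fin 3) ℝ)
    (hWK : ∀ (R : SO3) (y : V3),
      WK (mv (R : Matrix (Fin 3) (Fin 3) ℝ) y) * (R : Matrix (Fin 3) (Fin 3) ℝ) =
        (R : Matrix (Fin 3) (Fin 3) ℝ) * WK y)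
    (hWV : ∀ (R : SO3) (y : V3),
      WV (mv (R : Matrix (Fin 3) (Fin 3) ℝ) y) * (R : Matrix (Fin 3) (Fin 3) ℝ) =
        (R : Matrix (Fin 3) (Fin 3) ℝ) * WV y)
    (X : Fin N → V3) (R : SO3) (T : V3) (i : Fin N) :
    FP k WQ WK WV (rt R T X) i = (R : Matrix (Fin 3) (Fin 3) ℝ) *ᵥ FP k WQ WK WV X i := by
  unfold FP
  rw [nbhd_rt, mulVec_sum']
  apply Finset.sum_congr rfl
  intro j hj
  rw [rt_sub, feat_rt R T X j k hk1, feat_rt R T X i k hk1,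
    Wmv WK hWK, Wmv WV hWV, WQmv WQ hWQ, dot_mv, Matrix.mulVec_smul]
  congr 2
  apply Finset.sum_congr rfl
  intro j' hj'
  rw [rt_sub, feat_rt R T X j' k hk1, Wmv WK hWK, dot_mv]

lemma rtq_sub {N : ℕ} (R : SO3) (T : V3) (X : Fin N → V3) (q : V3) (j : Fin N) :
    rt R T X j - (mv (R : Matrix (Fin 3) (Fin 3) ℝ) q + T) =
      mv (R : Matrix (Fin 3) (Fin 3) ℝ) (X j - q) := by
  rw [mv_sub]; simp [rt]

lemma qfeat_rt {N : ℕ} (R : SO3) (T : V3) (X : Fin N → V3) (q : V3) (c : Fin N) (k : ℕ)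
    (hk1 : 1 ≤ k) :
    qfeat (rt R T X) (mv (R : Matrix (Fin 3) (Fin 3) ℝ) q + T) c k =
      mv (R : Matrix (Fin 3) (Fin 3) ℝ) (qfeat X q c k) := by
  classical
  unfold qfeat
  rw [nbhd_rt]
  have hsum : ∑ j ∈ nbhd X c k, rt R T X j =
      mv (R : Matrix (Fin 3) (Fin 3) ℝ) (∑ j ∈ nbhd X c k, X j) + (nbhd X c k).card • T := by
    simp only [rt]
    rw [Finset.sum_add_distrib, Finset.sum_const]
    congr 1
    exact (map_sum (mvL (R : Matrix (Fin 3) (Fin 3) ℝ)) X (nbhd X c k)).symm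
  rw [hsum, mv_sub, mv_smul, smul_add]
  have hT : ((nbhd X c k).card : ℝ)⁻¹ • ((nbhd X c k).card • T) = T := by
    rw [← Nat.cast_smul_eq_nsmul ℝ, smul_smul, inv_mul_cancel₀, one_smul]
    exact_mod_cast card_nbhd_pos X c k hk1
  rw [hT]
  abel

lemma W1mv (W'V : V3 → Matrix (Fin 1) (Fin 3) ℝ)
    (hW'V : ∀ (R : SO3) (y : V3),
      W'V (mv (R : Matrix (Fin 3) (Fin 3) ℝ) y) * (R : Matrix (Fin 3) (Fin 3) ℝ) = W'V y)
    (R : SO3) (y : V3) (F : Fin 3 → ℝ) :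
    W'V (mv (R : Matrix (Fin 3) (Fin 3) ℝ) y) *ᵥ ((R : Matrix (Fin 3) (Fin 3) ℝ) *ᵥ F) =
      W'V y *ᵥ F := by
  rw [Matrix.mulVec_mulVec, hW'V]

lemma Wmv' (W : V3 → Matrix (Fin 3) (Fin 3) ℝ)
    (hW : ∀ (R : SO3) (y : V3),
      W (mv (R : Matrix (Fin 3) (Fin 3) ℝ) y) * (R : Matrix (Fin 3) (Fin 3) ℝ) =
        (R : Matrix (Fin 3) (Fin 3) ℝ) * W y) (R : SO3) (y : V3) (F : Fin 3 → ℝ) :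
    W (mv (R : Matrix (Fin 3) (Fin 3) ℝ) y) *ᵥ ((R : Matrix (Fin 3) (Fin 3) ℝ) *ᵥ F) =
      (R : Matrix (Fin 3) (Fin 3) ℝ) *ᵥ (W y *ᵥ F) := by
  rw [Matrix.mulVec_mulVec, hW R y, ← Matrix.mulVec_mulVec]


/-- Proposition 1, concrete one-layer instantiation: the occupancy score
is SE(3)-invariant: `𝒯(L_{(R,T)}[X], R·q + T) = 𝒯(X, q)`. -/
theorem occScore_invariant (N : ℕ) (k : ℕ) (hk1 : 1 ≤ k) (hkN : k ≤ N)
    (WQ W'Q : Matrix (Fin 3) (Fin 3) ℝ)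
    (hWQ : ∀ R : SO3, WQ * (R : Matrix (Fin 3) (Fin 3) ℝ) =
      (R : Matrix (Fin 3) (Fin 3) ℝ) * WQ)
    (hW'Q : ∀ R : SO3, W'Q * (R : Matrix (Fin 3) (Fin 3) ℝ) =
      (R : Matrix (Fin 3) (Fin 3) ℝ) * W'Q)
    (WK WV W'K : V3 → Matrix (Fin 3) (Fin 3) ℝ)
    (hWK : ∀ (R : SO3) (y : V3),
      WK (mv (R : Matrix (Fin 3) (Fin 3) ℝ) y) * (R : Matrix (Fin 3) (Fin 3) ℝ) =
        (R : Matrix (Fin 3) (Fin 3) ℝ) * WK y)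
    (hWV : ∀ (R : SO3) (y : V3),
      WV (mv (R : Matrix (Fin 3) (Fin 3) ℝ) y) * (R : Matrix (Fin 3) (Fin 3) ℝ) =
        (R : Matrix (Fin 3) (Fin 3) ℝ) * WV y)
    (hW'K : ∀ (R : SO3) (y : V3),
      W'K (mv (R : Matrix (Fin 3) (Fin 3) ℝ) y) * (R : Matrix (Fin 3) (Fin 3) ℝ) =
        (R : Matrix (Fin 3) (Fin 3) ℝ) * W'K y)
    (W'V : V3 → Matrix (Fin 1) (Fin 3) ℝ)
    (hW'V : ∀ (R : SO3) (y : V3),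
      W'V (mv (R : Matrix (Fin 3) (Fin 3) ℝ) y) * (R : Matrix (Fin 3) (Fin 3) ℝ) = W'V y)
    (X : Fin N → V3) (q : V3) (c : Fin N)
    (hc : ∀ i : Fin N, i ≠ c → ‖q - X c‖ < ‖q - X i‖)
    (R : SO3) (T : V3) :
    occScore k WQ W'Q WK WV W'K W'V (rt R T X)
        (mv (R : Matrix (Fin 3) (Fin 3) ℝ) q + T) c =
      occScore k WQ W'Q WK WV W'K W'V X q c := by
  unfold occScore
  rw [nbhd_rt]
  have hden : (∑ j' ∈ nbhd X c k,
      Real.exp ((W'Q *ᵥ qfeat (rt R T X) (mv (R : Matrix (Fin 3) (Fin 3) ℝ) q + T) c k) ⬝ᵥ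
        (W'K (rt R T X j' - (mv (R : Matrix (Fin 3) (Fin 3) ℝ) q + T)) *ᵥ
          FP k WQ WK WV (rt R T X) j'))) =
      ∑ j' ∈ nbhd X c k,
      Real.exp ((W'Q *ᵥ qfeat X q c k) ⬝ᵥ (W'K (X j' - q) *ᵥ FP k WQ WK WV X j')) := by
    apply Finset.sum_congr rfl
    intro j' _
    rw [rtq_sub, qfeat_rt R T X q c k hk1, FP_rt k hk1 WQ hWQ WK WV hWK hWV X R T j',
      Wmv' W'K hW'K, WQmv W'Q hW'Q, dot_mv]
  refine congrFun ?_ (0 : Fin 1)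
  apply Finset.sum_congr rfl
  intro j hj
  rw [hden, rtq_sub, qfeat_rt R T X q c k hk1, FP_rt k hk1 WQ hWQ WK WV hWK hWV X R T j,
    Wmv' W'K hW'K, WQmv W'Q hW'Q, dot_mv, W1mv W'V hW'V]
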